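/- Every B-invariant polynomial function on 𝔟* ≅ 𝔤/𝔲⁺ (with the conjugation action of B) is a polynomial in the trace function; that is, ℂ[𝔟*]^B ≅ ℂ[tr(s)]. -/

import Mathlib

open Matrix

namespace BInvAux

lemma eval_eval₂ {n : ℕ} (P : MvPolynomial (Fin n × Fin n) ℂ)
    (g : Fin n × Fin n → Polynomial ℂ) (t : ℂ) :
    (MvPolynomial.eval₂ Polynomial.C g P).eval t
      = MvPolynomial.eval (fun p => (g p).eval t) P := by
  have h1 : (Polynomial.evalRingHom t).comp (Polynomial.C : ℂ →+* Polynomial ℂ)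
      = RingHom.id ℂ := by ext x; simp
  calc (MvPolynomial.eval₂ Polynomial.C g P).eval t
      = (Polynomial.evalRingHom t) (MvPolynomial.eval₂ Polynomial.C g P) := rfl
    _ = MvPolynomial.eval₂ ((Polynomial.evalRingHom t).comp Polynomial.C)
          ((Polynomial.evalRingHom t) ∘ g) P := MvPolynomial.eval₂_comp_left _ _ _ _
    _ = MvPolynomial.eval (fun p => (g p).eval t) P := by
          rw [h1]; rfl

lemma poly_const {q : Polynomial ℂ} {c : ℂ} (h : ∀ t : ℂ, t ≠ 0 → q.eval t = c) :
    q.eval 0 = c := by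
  have hq : q - Polynomial.C c = 0 := by
    apply Polynomial.eq_zero_of_infinite_isRoot
    apply Set.Infinite.mono (s := {(0:ℂ)}ᶜ)
    · intro t ht
      have ht' : t ≠ 0 := ht
      simp [Polynomial.IsRoot, h t ht']
    · exact (Set.finite_singleton (0:ℂ)).infinite_compl
  have hq' : q = Polynomial.C c := by rwa [sub_eq_zero] at hq
  rw [hq']; simp

lemma std_mul_diag {n : ℕ} (i j : Fin n) (c : ℂ) (d : Fin n → ℂ) :
    Matrix.single i j c * Matrix.diagonal d = Matrix.single i j (c * d j) := by
  ext a b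
  rw [Matrix.mul_diagonal]
  simp only [Matrix.single, Matrix.of_apply, ite_mul, zero_mul]
  by_cases h : i = a ∧ j = b
  · obtain ⟨rfl, rfl⟩ := h; simp
  · simp [h]

lemma diag_mul_std {n : ℕ} (i j : Fin n) (c : ℂ) (d : Fin n → ℂ) :
    Matrix.diagonal d * Matrix.single i j c = Matrix.single i j (d i * c) := by
  ext a b
  rw [Matrix.diagonal_mul]
  simp only [Matrix.single, Matrix.of_apply, mul_ite, mul_zero]
  by_cases h : i = a ∧ j = b
  · obtain ⟨rfl, rfl⟩ := h; simp
  · simp [h]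

lemma std_mul_diag1 {n : ℕ} (i j : Fin n) (d : Fin n → ℂ) :
    Matrix.single i j (1:ℂ) * Matrix.diagonal d = d j • Matrix.single i j 1 := by
  rw [std_mul_diag, one_mul, Matrix.smul_single, smul_eq_mul, mul_one]

lemma diag_mul_std1 {n : ℕ} (i j : Fin n) (d : Fin n → ℂ) :
    Matrix.diagonal d * Matrix.single i j (1:ℂ) = d i • Matrix.single i j 1 := by
  rw [diag_mul_std, mul_one, Matrix.smul_single, smul_eq_mul, mul_one]

lemma std_mul_same1 {n : ℕ} (i j k : Fin n) :
    Matrix.single i j (1:ℂ) * Matrix.single j k (1:ℂ)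
      = Matrix.single i k 1 := by
  rw [Matrix.single_mul_single_same, one_mul]

end BInvAux

open BInvAux

theorem B_invariants_of_borel_dual (n : ℕ) (hn : 1 ≤ n)
    (F : Matrix (Fin n) (Fin n) ℂ → ℂ)
    (hpoly : ∃ P : MvPolynomial (Fin n × Fin n) ℂ,
      ∀ s : Matrix (Fin n) (Fin n) ℂ,
        F s = MvPolynomial.eval (fun p => s p.1 p.2) P)
    (hdesc : ∀ s u : Matrix (Fin n) (Fin n) ℂ,
      (∀ ι γ : Fin n, γ ≤ ι → u ι γ = 0) → F (s + u) = F s)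
    (hinv : ∀ b s : Matrix (Fin n) (Fin n) ℂ,
      b.BlockTriangular id → IsUnit b → F (b * s * b⁻¹) = F s) :
    ∃ Q : Polynomial ℂ,
      ∀ s : Matrix (Fin n) (Fin n) ℂ, F s = Q.eval s.trace := by
  obtain ⟨P, hP⟩ := hpoly
  have h0lt : 0 < n := hn
  -- Step A : lower triangular matrices reduce to their diagonal
  have hA : ∀ s : Matrix (Fin n) (Fin n) ℂ, (∀ i j : Fin n, i < j → s i j = 0) →
      F s = F (Matrix.diagonal (fun i => s i i)) := by
    intro s hs
    set g : Fin n × Fin n → Polynomial ℂ := fun p =>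
      Polynomial.C (s p.1 p.2) *
        (if (p.2 : ℕ) ≤ (p.1 : ℕ) then Polynomial.X ^ ((p.1 : ℕ) - (p.2 : ℕ)) else 0)
      with hg
    set q : Polynomial ℂ := MvPolynomial.eval₂ Polynomial.C g P with hq
    have hM : ∀ t : ℂ, q.eval t = F (Matrix.of fun i j : Fin n =>
        s i j * (if (j : ℕ) ≤ (i : ℕ) then t ^ ((i : ℕ) - (j : ℕ)) else 0)) := by
      intro t
      rw [hq, eval_eval₂, hP]
      have : (fun p : Fin n × Fin n => (g p).eval t)
          = fun p : Fin n × Fin n => (Matrix.of fun i j : Fin n =>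
              s i j * (if (j : ℕ) ≤ (i : ℕ) then t ^ ((i : ℕ) - (j : ℕ)) else 0)) p.1 p.2 := by
        funext p
        simp only [hg, Matrix.of_apply]
        split_ifs <;> simp
      rw [this]
    have hconst : ∀ t : ℂ, t ≠ 0 → q.eval t = F s := by
      intro t ht
      rw [hM t]
      set b : Matrix (Fin n) (Fin n) ℂ := Matrix.diagonal (fun i : Fin n => t ^ (i : ℕ)) with hb
      have hbunit : IsUnit b := by
        rw [Matrix.isUnit_iff_isUnit_det, hb, Matrix.det_diagonal]
        exact isUnit_iff_ne_zero.mpr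
          (Finset.prod_ne_zero_iff.mpr (fun i _ => pow_ne_zero _ ht))
      have key : (Matrix.of fun i j : Fin n =>
          s i j * (if (j : ℕ) ≤ (i : ℕ) then t ^ ((i : ℕ) - (j : ℕ)) else 0)) = b * s * b⁻¹ := by
        have hbinv : b⁻¹ = Matrix.diagonal (fun i : Fin n => (t ^ (i : ℕ))⁻¹) := by
          apply Matrix.inv_eq_right_inv
          rw [hb, Matrix.diagonal_mul_diagonal,
            show (fun i : Fin n => t ^ (i : ℕ) * (t ^ (i : ℕ))⁻¹) = fun _ => (1 : ℂ)
              from funext fun i => mul_inv_cancel₀ (pow_ne_zero _ ht),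
            Matrix.diagonal_one]
        rw [hbinv, hb]
        ext i j
        rw [Matrix.mul_diagonal, Matrix.diagonal_mul, Matrix.of_apply]
        rcases le_or_gt (j : ℕ) (i : ℕ) with hle | hlt
        · rw [if_pos hle, pow_sub₀ t ht hle]
          ring
        · have : s i j = 0 := hs i j (by exact hlt)
          rw [if_neg (by omega), this]
          ring
      rw [key]
      exact hinv b s (Matrix.blockTriangular_diagonal _) hbunit
    have h0 := poly_const hconst
    rw [hM 0] at h0
    rw [← h0]
    congr 1
    ext i j
    rw [Matrix.of_apply, Matrix.diagonal_apply]
    by_cases hij : i = j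
    · subst hij; simp
    · have hvij : (i : ℕ) ≠ (j : ℕ) := fun h => hij (Fin.ext h)
      rw [if_neg hij]
      rcases le_or_gt (j : ℕ) (i : ℕ) with hle | hlt
      · rw [if_pos hle, zero_pow (by omega), mul_zero]
      · rw [if_neg (by omega), mul_zero]
  -- Step B : shifting mass between adjacent diagonal entries
  have hB : ∀ (lam : Fin n → ℂ) (i k : Fin n), (i : ℕ) + 1 = (k : ℕ) → ∀ x : ℂ,
      F (Matrix.diagonal lam)
        = F (Matrix.diagonal
            (Function.update (Function.update lam i (lam i + x)) k (lam k - x))) := by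
    intro lam i k hik x
    have hikne : i ≠ k := fun h => by rw [h] at hik; omega
    have hkine : k ≠ i := hikne.symm
    have hilt : i < k := by rw [Fin.lt_def]; omega
    have hile : i ≤ k := le_of_lt hilt
    set E : Matrix (Fin n) (Fin n) ℂ := Matrix.single k i 1 with hE
    set E' : Matrix (Fin n) (Fin n) ℂ := Matrix.single i k 1 with hE'
    set lam' := Function.update (Function.update lam i (lam i + x)) k (lam k - x) with hlam'
    set b : Matrix (Fin n) (Fin n) ℂ := 1 + x • E' with hb
    have hE'E' : E' * E' = 0 := by
      rw [hE', Matrix.single_mul_single_of_ne (h := hkine)]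
    have haa : (x • E') * (x • E') = (0 : Matrix (Fin n) (Fin n) ℂ) := by
      rw [smul_mul_assoc, mul_smul_comm, hE'E', smul_zero, smul_zero]
    have hbunit : IsUnit b := by
      refine ⟨⟨b, 1 - x • E', ?_, ?_⟩, rfl⟩
      · show b * (1 - x • E') = 1
        rw [hb, mul_sub, mul_one, add_mul, one_mul, haa]
        abel
      · show (1 - x • E') * b = 1
        rw [hb, sub_mul, one_mul, mul_add, mul_one, haa]
        abel
    have hbtri : b.BlockTriangular id := by
      rw [hb]
      apply Matrix.blockTriangular_one.add
      rw [hE', Matrix.smul_single]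
      exact Matrix.blockTriangular_single hile _
    have hdiag : Matrix.diagonal lam'
        = Matrix.diagonal lam + x • Matrix.single i i 1
            - x • Matrix.single k k 1 := by
      ext a c
      rw [Matrix.sub_apply, Matrix.add_apply, Matrix.smul_apply, Matrix.smul_apply]
      by_cases hac : a = c
      · subst hac
        rw [Matrix.diagonal_apply_eq, Matrix.diagonal_apply_eq]
        rcases eq_or_ne a k with rfl | hak
        · rw [hlam', Function.update_self]
          have h1 : Matrix.single i i (1:ℂ) a a = 0 := by
            simp only [Matrix.single, Matrix.of_apply]
            rw [if_neg]; rintro ⟨rfl, -⟩; exact hikne rfl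
          have h2 : Matrix.single a a (1:ℂ) a a = 1 := by
            simp [Matrix.single]
          rw [h1, h2]
          simp
        · rcases eq_or_ne a i with rfl | hai
          · rw [hlam', Function.update_of_ne hak, Function.update_self]
            have h1 : Matrix.single a a (1:ℂ) a a = 1 := by
              simp [Matrix.single]
            have h2 : Matrix.single k k (1:ℂ) a a = 0 := by
              simp only [Matrix.single, Matrix.of_apply]
              rw [if_neg]; rintro ⟨rfl, -⟩; exact hak rfl
            rw [h1, h2]
            simp
          · rw [hlam', Function.update_of_ne hak, Function.update_of_ne hai]
            have h1 : Matrix.single i i (1:ℂ) a a = 0 := by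
              simp only [Matrix.single, Matrix.of_apply]
              rw [if_neg]; rintro ⟨rfl, -⟩; exact hai rfl
            have h2 : Matrix.single k k (1:ℂ) a a = 0 := by
              simp only [Matrix.single, Matrix.of_apply]
              rw [if_neg]; rintro ⟨rfl, -⟩; exact hak rfl
            rw [h1, h2]
            simp
      · rw [Matrix.diagonal_apply_ne _ hac, Matrix.diagonal_apply_ne _ hac]
        have h1 : Matrix.single i i (1:ℂ) a c = 0 := by
          simp only [Matrix.single, Matrix.of_apply]
          rw [if_neg]; rintro ⟨rfl, rfl⟩; exact hac rfl
        have h2 : Matrix.single k k (1:ℂ) a c = 0 := by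
          simp only [Matrix.single, Matrix.of_apply]
          rw [if_neg]; rintro ⟨rfl, rfl⟩; exact hac rfl
        rw [h1, h2]
        simp
    have hdet : IsUnit b.det := (Matrix.isUnit_iff_isUnit_det b).mp hbunit
    letI := Matrix.invertibleOfIsUnitDet b hdet
    have key : b * (Matrix.diagonal lam + E) * b⁻¹
        = Matrix.diagonal lam' + E + (x * lam k - x * lam i - x ^ 2) • E' := by
      have hz1 : Matrix.single k k (1:ℂ) * Matrix.single i k 1 = 0 :=
        Matrix.single_mul_single_of_ne (h := hkine) ..
      have hz2 : Matrix.single i k (1:ℂ) * Matrix.single i k 1 = 0 :=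
        Matrix.single_mul_single_of_ne (h := hkine) ..
      rw [Matrix.mul_inv_eq_iff_eq_mul_of_invertible, hdiag, hb, hE, hE']
      simp only [add_mul, mul_add, sub_mul, one_mul, mul_one, smul_mul_assoc, mul_smul_comm,
        std_mul_diag1, diag_mul_std1, std_mul_same1, hz1, hz2,
        mul_zero, zero_mul, smul_zero, add_zero, zero_add]
      module
    have hgen : ∀ μ : Fin n → ℂ, F (Matrix.diagonal μ + E) = F (Matrix.diagonal μ) := by
      intro μ
      have hlow : ∀ a c : Fin n, a < c → (Matrix.diagonal μ + E) a c = 0 := by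
        intro a c hac
        rw [Matrix.add_apply, Matrix.diagonal_apply_ne _ (ne_of_lt hac), hE]
        simp only [Matrix.single, Matrix.of_apply]
        rw [if_neg, zero_add]
        rintro ⟨rfl, rfl⟩
        exact (lt_asymm hac) hilt
      have hdg : (fun a => (Matrix.diagonal μ + E) a a) = μ := by
        funext a
        rw [Matrix.add_apply, Matrix.diagonal_apply_eq]
        have hEaa : E a a = 0 := by
          rw [hE]
          simp only [Matrix.single, Matrix.of_apply]
          rw [if_neg]
          rintro ⟨rfl, rfl⟩
          exact hkine rfl
        rw [hEaa, add_zero]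
      rw [hA (Matrix.diagonal μ + E) hlow, hdg]
    have hu : ∀ ι γ : Fin n, γ ≤ ι → ((x * lam k - x * lam i - x ^ 2) • E') ι γ = 0 := by
      intro ι γ hle2
      rw [hE', Matrix.smul_apply]
      simp only [Matrix.single, Matrix.of_apply]
      rw [if_neg, smul_zero]
      rintro ⟨rfl, rfl⟩
      exact absurd hle2 (not_le.mpr hilt)
    calc F (Matrix.diagonal lam) = F (Matrix.diagonal lam + E) := (hgen lam).symm
      _ = F (Matrix.diagonal lam' + E + (x * lam k - x * lam i - x ^ 2) • E') := by
            rw [← key]; exact (hinv b _ hbtri hbunit).symm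
      _ = F (Matrix.diagonal lam' + E) := hdesc _ _ hu
      _ = F (Matrix.diagonal lam') := hgen lam'
  -- Step C : collapse a diagonal matrix onto its trace in the corner
  have hC : ∀ (k : ℕ) (lam : Fin n → ℂ), (∀ j : Fin n, k < (j : ℕ) → lam j = 0) →
      F (Matrix.diagonal lam)
        = F (Matrix.diagonal
            (fun j => if j = (⟨0, h0lt⟩ : Fin n) then (∑ j, lam j) else 0)) := by
    intro k
    induction k with
    | zero =>
      intro lam hlam
      have hfun : lam = fun j => if j = (⟨0, h0lt⟩ : Fin n) then (∑ j, lam j) else 0 := by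
        funext j
        by_cases hj : j = (⟨0, h0lt⟩ : Fin n)
        · subst hj
          rw [if_pos rfl]
          symm
          apply Finset.sum_eq_single
          · intro b _ hb
            exact hlam b (Nat.pos_of_ne_zero (fun h => hb (Fin.ext h)))
          · intro h; exact absurd (Finset.mem_univ _) h
        · rw [if_neg hj]
          exact hlam j (Nat.pos_of_ne_zero (fun h => hj (Fin.ext h)))
      exact congrArg (fun v => F (Matrix.diagonal v)) hfun
    | succ k ih =>
      intro lam hlam
      by_cases hkn : k + 1 < n
      · have hkn' : k < n := Nat.lt_of_succ_lt hkn
        have hstep := hB lam ⟨k, hkn'⟩ ⟨k + 1, hkn⟩ rfl (lam ⟨k + 1, hkn⟩)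
        set i : Fin n := ⟨k, hkn'⟩ with hi
        set kk : Fin n := ⟨k + 1, hkn⟩ with hkk
        set lam' := Function.update (Function.update lam i (lam i + lam kk)) kk
            (lam kk - lam kk) with hlam'd
        have hikk : i ≠ kk := by
          intro h
          rw [Fin.ext_iff] at h
          simp [hi, hkk] at h
        have hsupp : ∀ j : Fin n, k < (j : ℕ) → lam' j = 0 := by
          intro j hj
          rcases eq_or_ne j kk with rfl | hjk
          · rw [hlam'd, Function.update_self]; ring
          · have hji : j ≠ i := by
              intro h
              rw [h, hi] at hj
              simp at hj
            rw [hlam'd, Function.update_of_ne hjk, Function.update_of_ne hji]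
            apply hlam
            have hne : (j : ℕ) ≠ k + 1 := by
              intro h
              exact hjk (by rw [hkk]; exact Fin.ext h)
            omega
        have hsum : (∑ j, lam' j) = ∑ j, lam j := by
          rw [hlam'd,
            Finset.sum_update_of_mem (Finset.mem_univ kk),
            Finset.sum_update_of_mem
              (show i ∈ Finset.univ \ {kk} by simp [hikk])]
          have e1 : (∑ j, lam j)
              = (∑ j ∈ Finset.univ \ {kk}, lam j) + lam kk :=
            Finset.sum_eq_sum_sdiff_singleton_add (Finset.mem_univ kk) _
          have e2 : (∑ j ∈ Finset.univ \ {kk}, lam j)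
              = (∑ j ∈ (Finset.univ \ {kk}) \ {i}, lam j) + lam i :=
            Finset.sum_eq_sum_sdiff_singleton_add (by simp [hikk]) _
          rw [e1, e2]
          ring
        rw [hstep, ih lam' hsupp, hsum]
      · refine ih lam fun j hj => ?_
        exact absurd j.isLt (by omega)
  -- assemble everything
  refine ⟨MvPolynomial.eval₂ Polynomial.C
      (fun p => if p.1 = p.2 then
        (if p.1 = (⟨0, h0lt⟩ : Fin n) then Polynomial.X else 0) else 0) P, ?_⟩
  intro s
  set A : Matrix (Fin n) (Fin n) ℂ :=
    Matrix.of fun a c : Fin n => if (c : ℕ) ≤ (a : ℕ) then s a c else 0 with hAdef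
  have hsplit : F s = F A := by
    have hu : ∀ ι γ : Fin n, γ ≤ ι → (s - A) ι γ = 0 := by
      intro ι γ h
      rw [Matrix.sub_apply, hAdef, Matrix.of_apply, if_pos (show (γ:ℕ) ≤ (ι:ℕ) from h), sub_self]
    have hds := hdesc A (s - A) hu
    have e : A + (s - A) = s := by abel
    rw [e] at hds
    exact hds
  have hlowA : ∀ a c : Fin n, a < c → A a c = 0 := by
    intro a c h
    rw [Fin.lt_def] at h
    rw [hAdef, Matrix.of_apply, if_neg (by omega)]
  have hdiagA : F A = F (Matrix.diagonal (fun a => s a a)) := by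
    rw [hA A hlowA,
      show (fun a => A a a) = (fun a => s a a) from
        funext fun a => by rw [hAdef, Matrix.of_apply, if_pos le_rfl]]
  have htr := hC n (fun a => s a a) (fun j hj => absurd j.isLt (by omega))
  have hQ : ∀ w : ℂ, (MvPolynomial.eval₂ Polynomial.C
      (fun p => if p.1 = p.2 then
        (if p.1 = (⟨0, h0lt⟩ : Fin n) then Polynomial.X else 0) else 0) P).eval w
      = F (Matrix.diagonal (fun j => if j = (⟨0, h0lt⟩ : Fin n) then w else 0)) := by
    intro w
    rw [eval_eval₂, hP]
    have hfun : (fun p : Fin n × Fin n =>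
        ((if p.1 = p.2 then
          (if p.1 = (⟨0, h0lt⟩ : Fin n) then Polynomial.X else 0) else 0) : Polynomial ℂ).eval w)
        = fun p : Fin n × Fin n =>
            (Matrix.diagonal (fun j => if j = (⟨0, h0lt⟩ : Fin n) then w else 0)) p.1 p.2 := by
      funext p
      rw [Matrix.diagonal_apply]
      by_cases h1 : p.1 = p.2
      · rw [if_pos h1, if_pos h1]
        by_cases h2 : p.1 = (⟨0, h0lt⟩ : Fin n)
        · rw [if_pos h2, if_pos h2, Polynomial.eval_X]
        · rw [if_neg h2, if_neg h2, Polynomial.eval_zero]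
      · rw [if_neg h1, if_neg h1, Polynomial.eval_zero]
    rw [hfun]
  rw [hsplit, hdiagA, htr,
    show Matrix.trace s = ∑ a, s a a by simp [Matrix.trace, Matrix.diag],
    hQ (∑ a, s a a)]
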